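/- For fixed N_t and nonnegative reals (t_a)_{a∈A}, let m(z) denote the unique positive solution of the fixed-point equation FP(t,z) for each z > 0. Then the function z ↦ m(z) is strictly decreasing on (0,∞): for all 0 < z₁ < z₂, m(z₁) > m(z₂). -/

import Mathlib

open Finset

/-- The positive solution `m(z)` of the fixed-point equation FP(t,z)
is strictly decreasing in `z`. -/
theorem fixed_point_strict_antitone_in_z
    (Nt : ℕ) (hNt : 0 < Nt)
    (A : Type*) [Fintype A] [Nonempty A]
    (t : A → ℝ) (ht : ∀ a, 0 ≤ t a)
    (z₁ z₂ m₁ m₂ : ℝ) (hz₁ : 0 < z₁) (hz : z₁ < z₂)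
    (hm₁ : 0 < m₁) (hm₂ : 0 < m₂)
    (hfp₁ : 1 / m₁ = (1 / (Nt : ℝ)) * ∑ a, t a / (1 + t a * m₁) + z₁)
    (hfp₂ : 1 / m₂ = (1 / (Nt : ℝ)) * ∑ a, t a / (1 + t a * m₂) + z₂) :
    m₂ < m₁ := by
  by_contra h
  push_neg at h
  have hNt' : (0:ℝ) < Nt := by exact_mod_cast hNt
  have h1 : ∀ a, 0 < 1 + t a * m₁ := fun a => by nlinarith [ht a, hm₁]
  have h2 : ∀ a, 0 < 1 + t a * m₂ := fun a => by nlinarith [ht a, hm₂]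
  set S₁ := ∑ a, t a / (1 + t a * m₁) with hS₁def
  set S₂ := ∑ a, t a / (1 + t a * m₂) with hS₂def
  set T := ∑ a, (t a)^2 / ((1 + t a * m₁) * (1 + t a * m₂)) with hTdef
  have hdiff : S₁ - S₂ = (m₂ - m₁) * T := by
    rw [hS₁def, hS₂def, hTdef, ← Finset.sum_sub_distrib, Finset.mul_sum]
    apply Finset.sum_congr rfl
    intro a _
    have h1a := (h1 a).ne'
    have h2a := (h2 a).ne'
    field_simp
    ring
  have hTpos : 0 ≤ T := by
    apply Finset.sum_nonneg
    intro a _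
    exact div_nonneg (sq_nonneg _) (le_of_lt (mul_pos (h1 a) (h2 a)))
  have hTle : T ≤ S₁ / m₂ := by
    rw [hS₁def, Finset.sum_div, hTdef]
    apply Finset.sum_le_sum
    intro a _
    rw [div_div, div_le_div_iff₀ (mul_pos (h1 a) (h2 a)) (mul_pos (h1 a) hm₂)]
    nlinarith [ht a, h1 a, hm₂, mul_nonneg (ht a) (le_of_lt (h1 a))]
  have hSval : (1 / (Nt:ℝ)) * S₁ = 1 / m₁ - z₁ := by linarith
  have e2 : (1:ℝ)/m₁ - 1/m₂ = (1/(Nt:ℝ)) * ((m₂ - m₁) * T) + (z₁ - z₂) := by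
    rw [← hdiff, mul_sub]; linarith
  have einv : (1:ℝ)/m₁ - 1/m₂ = (m₂ - m₁) / (m₁ * m₂) := by
    field_simp
  -- (1/Nt) * T ≤ (1/m₁ - z₁)/m₂
  have hNTle : (1/(Nt:ℝ)) * T ≤ (1/m₁ - z₁) / m₂ := by
    rw [← hSval, mul_div_assoc]
    apply mul_le_mul_of_nonneg_left hTle (by positivity)
  have hd : 0 ≤ m₂ - m₁ := by linarith
  have hmul : (m₂ - m₁) * ((1/(Nt:ℝ)) * T) ≤ (m₂ - m₁) * ((1/m₁ - z₁) / m₂) :=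
    mul_le_mul_of_nonneg_left hNTle hd
  have hexp : (m₂ - m₁) * ((1/m₁ - z₁) / m₂) = (m₂ - m₁) / (m₁ * m₂) - (m₂ - m₁) * z₁ / m₂ := by
    field_simp
  have hzz : (m₂ - m₁) * z₁ / m₂ ≤ z₁ - z₂ := by
    rw [e2] at einv
    rw [hexp] at hmul
    nlinarith
  have : 0 ≤ (m₂ - m₁) * z₁ / m₂ := by positivity
  linarith
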